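/- Let D = [0,1]^d, and let A ⊆ D be an open set with nonempty topological frontier ∂A. Define the signed distance function d_A : ℝ^d → ℝ by d_A(x) = −dist(x, ∂A) if x belongs to the closure of A, and d_A(x) = dist(x, ∂A) otherwise. Then for every 1-Lipschitz function φ : ℝ^d → ℝ with φ = 0 on ∂A, one has ∫_D φ(x)(1/2 − 𝟙_A(x)) dx ≤ ∫_D d_A(x)(1/2 − 𝟙_A(x)) dx; that is, d_A minimizes the functional φ ↦ −∫_D φ(x)(1/2 − 𝟙_A(x)) dx over all 1-Lipschitz functions vanishing on ∂A. -/

import Mathlib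

open MeasureTheory

open Classical in
/-- The signed distance function of a set `A` with nonempty frontier:
`d_A(x) = -dist(x, ∂A)` on the closure of `A` and `d_A(x) = dist(x, ∂A)` otherwise. -/
noncomputable def signedDistFrontier {d : ℕ} (A : Set (EuclideanSpace ℝ (Fin d)))
    (x : EuclideanSpace ℝ (Fin d)) : ℝ :=
  if x ∈ closure A then -Metric.infDist x (frontier A) else Metric.infDist x (frontier A)

/-- Over all 1-Lipschitz functions vanishing on `∂A`, the signed distance function of `A`
minimizes `φ ↦ -∫_D φ(x) (1/2 - 𝟙_A(x)) dx`, where `D = [0,1]^d`; equivalently,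
`∫_D φ (1/2 - 𝟙_A) ≤ ∫_D d_A (1/2 - 𝟙_A)` for every such `φ`. -/
theorem signedDist_maximizes_integral
    (d : ℕ) (D : Set (EuclideanSpace ℝ (Fin d)))
    (hD : D = {x : EuclideanSpace ℝ (Fin d) | ∀ i, x i ∈ Set.Icc (0 : ℝ) 1})
    (A : Set (EuclideanSpace ℝ (Fin d))) (hAopen : IsOpen A) (hAD : A ⊆ D)
    (hA : (frontier A).Nonempty)
    (φ : EuclideanSpace ℝ (Fin d) → ℝ) (hφ : LipschitzWith 1 φ)
    (hφ0 : ∀ y ∈ frontier A, φ y = 0) :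
    ∫ x in D, φ x * (1 / 2 - A.indicator (fun _ => (1 : ℝ)) x) ≤
      ∫ x in D, signedDistFrontier A x * (1 / 2 - A.indicator (fun _ => (1 : ℝ)) x) := by
  classical
  obtain ⟨y₀, hy₀⟩ := hA
  -- D is closed
  have hDclosed : IsClosed D := by
    have : D = ⋂ i : Fin d, (fun x : EuclideanSpace ℝ (Fin d) => x i) ⁻¹' Set.Icc (0 : ℝ) 1 := by
      rw [hD]; ext x; simp [Set.mem_iInter]
    rw [this]
    exact isClosed_iInter fun i =>
      isClosed_Icc.preimage (EuclideanSpace.proj (𝕜 := ℝ) i).continuous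
  -- D is bounded
  have hDsub : D ⊆ Metric.closedBall 0 (Real.sqrt d) := by
    intro x hx
    rw [hD] at hx
    simp only [Metric.mem_closedBall, dist_zero_right]
    rw [EuclideanSpace.norm_eq]
    have h1 : ∀ i : Fin d, ‖x i‖ ^ 2 ≤ 1 := by
      intro i
      have h := hx i
      have : |x i| ≤ 1 := abs_le.2 ⟨by linarith [h.1], h.2⟩
      calc ‖x i‖ ^ 2 = |x i| ^ 2 := by rw [Real.norm_eq_abs]
        _ ≤ 1 ^ 2 := by nlinarith [abs_nonneg (x i)]
        _ = 1 := one_pow 2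
    calc Real.sqrt (∑ i, ‖x i‖ ^ 2) ≤ Real.sqrt (∑ _i : Fin d, (1 : ℝ)) :=
          Real.sqrt_le_sqrt (Finset.sum_le_sum fun i _ => h1 i)
      _ = Real.sqrt d := by simp
  have hy₀D : y₀ ∈ D := by
    have h1 : frontier A ⊆ closure A := frontier_subset_closure
    have h2 : closure A ⊆ closure D := closure_mono hAD
    rw [hDclosed.closure_eq] at h2
    exact h2 (h1 hy₀)
  -- distance bound on D
  set C : ℝ := 2 * Real.sqrt d with hC
  have hdist : ∀ x ∈ D, dist x y₀ ≤ C := by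
    intro x hx
    have h1 : ‖x‖ ≤ Real.sqrt d := by
      have := hDsub hx; simpa [dist_zero_right] using this
    have h2 : ‖y₀‖ ≤ Real.sqrt d := by
      have := hDsub hy₀D; simpa [dist_zero_right] using this
    calc dist x y₀ = ‖x - y₀‖ := dist_eq_norm x y₀
      _ ≤ ‖x‖ + ‖y₀‖ := norm_sub_le x y₀
      _ ≤ C := by rw [hC]; linarith
  -- key Lipschitz estimate
  have key : ∀ x, |φ x| ≤ Metric.infDist x (frontier A) := by
    intro x
    by_contra h
    push_neg at h
    obtain ⟨y, hy, hlt⟩ := (Metric.infDist_lt_iff ⟨y₀, hy₀⟩).1 h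
    have h2 : dist (φ x) (φ y) ≤ 1 * dist x y := hφ.dist_le_mul x y
    rw [hφ0 y hy, one_mul, Real.dist_eq, sub_zero] at h2
    linarith
  -- pointwise inequality
  have hpt : ∀ x ∈ D, φ x * (1 / 2 - A.indicator (fun _ => (1 : ℝ)) x) ≤
      signedDistFrontier A x * (1 / 2 - A.indicator (fun _ => (1 : ℝ)) x) := by
    intro x _
    by_cases hxA : x ∈ A
    · have hind : A.indicator (fun _ => (1 : ℝ)) x = 1 := Set.indicator_of_mem hxA _
      rw [hind]
      have hxc : x ∈ closure A := subset_closure hxA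
      have hsd : signedDistFrontier A x = -Metric.infDist x (frontier A) := if_pos hxc
      have : signedDistFrontier A x ≤ φ x := by
        rw [hsd]
        have := key x
        have := abs_le.1 this
        linarith [this.1]
      nlinarith
    · have hind : A.indicator (fun _ => (1 : ℝ)) x = 0 := Set.indicator_of_notMem hxA _
      rw [hind]
      have : φ x ≤ signedDistFrontier A x := by
        by_cases hxc : x ∈ closure A
        · have hxf : x ∈ frontier A := by
            rw [frontier, hAopen.interior_eq]
            exact ⟨hxc, hxA⟩
          have h0 : Metric.infDist x (frontier A) = 0 := Metric.infDist_zero_of_mem hxf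
          rw [signedDistFrontier, if_pos hxc, h0, hφ0 x hxf]
          norm_num
        · rw [signedDistFrontier, if_neg hxc]
          exact le_trans (le_abs_self _) (key x)
      nlinarith
  -- measurability and integrability
  have hDmeas : MeasurableSet D := hDclosed.measurableSet
  have hDfin : volume D < ⊤ :=
    lt_of_le_of_lt (measure_mono hDsub) measure_closedBall_lt_top
  have hsdmeas : Measurable (signedDistFrontier A) := by
    unfold signedDistFrontier
    exact Measurable.ite isClosed_closure.measurableSet
      (Metric.continuous_infDist_pt _).neg.measurable
      (Metric.continuous_infDist_pt _).measurable
  have hgmeas : Measurable (fun x : EuclideanSpace ℝ (Fin d) =>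
      (1 / 2 - A.indicator (fun _ => (1 : ℝ)) x)) := by
    exact (measurable_const.sub ((measurable_indicator_const_iff 1).2 hAopen.measurableSet))
  have hconst : IntegrableOn (fun _ : EuclideanSpace ℝ (Fin d) => C * 1) D volume :=
    integrableOn_const hDfin.ne
  have hgbd : ∀ x, |(1 / 2 - A.indicator (fun _ => (1 : ℝ)) x)| ≤ 1 := by
    intro x
    by_cases hxA : x ∈ A
    · rw [Set.indicator_of_mem hxA]; rw [abs_le]; norm_num
    · rw [Set.indicator_of_notMem hxA]; rw [abs_le]; norm_num
  have hbound : ∀ (f : EuclideanSpace ℝ (Fin d) → ℝ),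
      (∀ x ∈ D, |f x| ≤ C) → Measurable f →
      IntegrableOn (fun x => f x * (1 / 2 - A.indicator (fun _ => (1 : ℝ)) x)) D volume := by
    intro f hf hfm
    refine Integrable.mono' hconst ((hfm.mul hgmeas).aestronglyMeasurable) ?_
    refine (ae_restrict_iff' hDmeas).2 (Filter.Eventually.of_forall fun x hx => ?_)
    rw [Real.norm_eq_abs, abs_mul]
    have h1 := hf x hx
    have h2 := hgbd x
    have h3 : (0:ℝ) ≤ |f x| := abs_nonneg _
    nlinarith
  have hφbd : ∀ x ∈ D, |φ x| ≤ C := by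
    intro x hx
    exact le_trans (key x) (le_trans (Metric.infDist_le_dist_of_mem hy₀) (hdist x hx))
  have hsdbd : ∀ x ∈ D, |signedDistFrontier A x| ≤ C := by
    intro x hx
    have h1 : |signedDistFrontier A x| = Metric.infDist x (frontier A) := by
      unfold signedDistFrontier
      split
      · rw [abs_neg, abs_of_nonneg Metric.infDist_nonneg]
      · rw [abs_of_nonneg Metric.infDist_nonneg]
    rw [h1]
    exact le_trans (Metric.infDist_le_dist_of_mem hy₀) (hdist x hx)
  exact setIntegral_mono_on
    (hbound φ hφbd hφ.continuous.measurable)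
    (hbound _ hsdbd hsdmeas)
    hDmeas hpt
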